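/- arXiv:0903.4539 — 2 statements merged into one kernel-verified Lean document; each statement's English description precedes it below -/
import Mathlib

section
/- For every natural number q ≥ 1, every real number x with 0 < x ≤ 1, and every complex number s ≠ 1, the derivatives in s of the Hurwitz zeta function satisfy q^s · ζ'(s, x) + q^s · (log q) · ζ(s, x) = Σ_{r=0}^{q−1} ζ'(s, (r + x)/q). -/
open HurwitzZeta Complex Finset

-- Dirichlet series (convergence range) version of the Kubert identity
lemma hurwitzZeta_kubert_of_one_lt_re (q : ℕ) (hq : 1 ≤ q) (x : ℝ) (hx0 : 0 < x) (hx1 : x ≤ 1)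
    {s : ℂ} (hs : 1 < s.re) :
    (q : ℂ) ^ s * hurwitzZeta (x : UnitAddCircle) s =
      ∑ r ∈ Finset.range q, hurwitzZeta ((((r : ℝ) + x) / q : ℝ) : UnitAddCircle) s := by
  haveI : NeZero q := ⟨by omega⟩
  have hq0 : (0 : ℝ) < q := by exact_mod_cast hq
  have hx : x ∈ Set.Icc (0 : ℝ) 1 := ⟨hx0.le, hx1⟩
  have hsum := hasSum_hurwitzZeta_of_one_lt_re hx hs
  have hqne : (q : ℂ) ≠ 0 := Nat.cast_ne_zero.mpr (by omega)
  have hqs : (q : ℂ) ^ s ≠ 0 := by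
    simp [Complex.cpow_eq_zero_iff, hqne]
  -- split the tsum by residue classes mod q
  have key : hurwitzZeta (x : UnitAddCircle) s =
      ∑ j : ZMod q, ∑' m : ℕ, (1 : ℂ) / ((j.val + q * m : ℕ) + x) ^ s := by
    rw [← hsum.tsum_eq, Nat.sumByResidueClasses hsum.summable q]
  have inner : ∀ j : ZMod q, ∑' m : ℕ, (1 : ℂ) / ((j.val + q * m : ℕ) + x) ^ s =
      (q : ℂ) ^ (-s) * hurwitzZeta (((j.val + x) / q : ℝ) : UnitAddCircle) s := by
    intro j
    have ha : ((j.val + x) / q : ℝ) ∈ Set.Icc (0 : ℝ) 1 := by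
      constructor
      · positivity
      · rw [div_le_one hq0]
        have h1 : j.val + 1 ≤ q := ZMod.val_lt j
        have h2 : (j.val : ℝ) + 1 ≤ q := by exact_mod_cast h1
        linarith
    have hsumj := hasSum_hurwitzZeta_of_one_lt_re ha hs
    rw [← ((hsumj.mul_left ((q : ℂ) ^ (-s))).tsum_eq)]
    congr 1 with m
    have h1 : ((j.val + q * m : ℕ) + x : ℂ) =
        ((q : ℝ) : ℂ) * (((m + (j.val + x) / q : ℝ) : ℂ)) := by
      have hqne' : (q : ℝ) ≠ 0 := hq0.ne'
      push_cast
      field_simp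
      ring
    rw [h1, mul_cpow_ofReal_nonneg hq0.le (by positivity)]
    rw [cpow_neg]
    have h2 : ((q : ℝ) : ℂ) ^ s ≠ 0 := by
      simp only [Complex.ofReal_natCast]
      simp [Complex.cpow_eq_zero_iff, hqne]
    push_cast
    field_simp
  rw [key]
  simp_rw [inner]
  rw [← Finset.mul_sum, ← mul_assoc, ← cpow_add _ _ (by exact_mod_cast hq0.ne'), add_neg_cancel,
    cpow_zero, one_mul]
  -- convert sum over ZMod q to sum over range q
  refine Finset.sum_nbij' (fun j ↦ j.val) (fun r ↦ (r : ZMod q)) ?_ ?_ ?_ ?_ ?_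
  · intro j _; exact Finset.mem_range.mpr (ZMod.val_lt j)
  · intro r _; exact Finset.mem_univ _
  · intro j _; exact ZMod.natCast_zmod_val j
  · intro r hr; exact ZMod.val_natCast_of_lt (Finset.mem_range.mp hr)
  · intro j _; rfl

-- Kubert identity extended to all s ≠ 1 by analytic continuation
lemma hurwitzZeta_kubert (q : ℕ) (hq : 1 ≤ q) (x : ℝ) (hx0 : 0 < x) (hx1 : x ≤ 1)
    {s : ℂ} (hs : s ≠ 1) :
    (q : ℂ) ^ s * hurwitzZeta (x : UnitAddCircle) s =
      ∑ r ∈ Finset.range q, hurwitzZeta ((((r : ℝ) + x) / q : ℝ) : UnitAddCircle) s := by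
  have hq0 : (q : ℂ) ≠ 0 := by exact_mod_cast (by omega : q ≠ 0)
  set U : Set ℂ := {(1 : ℂ)}ᶜ with hU
  have hUo : IsOpen U := isOpen_compl_singleton
  set f : ℂ → ℂ := fun z ↦ (q : ℂ) ^ z * hurwitzZeta (x : UnitAddCircle) z with hf'
  set g : ℂ → ℂ := fun z ↦
    ∑ r ∈ Finset.range q, hurwitzZeta ((((r : ℝ) + x) / q : ℝ) : UnitAddCircle) z with hg'
  have hf : AnalyticOnNhd ℂ f U := by
    refine DifferentiableOn.analyticOnNhd (fun u hu ↦ ?_) hUo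
    exact (((differentiable_id.const_cpow (Or.inl hq0)) u).mul
      (differentiableAt_hurwitzZeta _ hu)).differentiableWithinAt
  have hg : AnalyticOnNhd ℂ g U := by
    refine DifferentiableOn.analyticOnNhd (fun u hu ↦ ?_) hUo
    exact (DifferentiableAt.fun_sum fun r _ ↦
      differentiableAt_hurwitzZeta _ hu).differentiableWithinAt
  have hUc : IsPreconnected U :=
    (isConnected_compl_singleton_of_one_lt_rank (rank_real_complex ▸ Nat.one_lt_ofNat)
      _).isPreconnected
  have hUmem : (2 : ℂ) ∈ U := by norm_num [hU]
  have hUmem' : s ∈ U := hs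
  refine hf.eqOn_of_preconnected_of_eventuallyEq hg hUc hUmem ?_ hUmem'
  have hV : {z : ℂ | 1 < z.re} ∈ nhds (2 : ℂ) :=
    (continuous_re.isOpen_preimage _ isOpen_Ioi).mem_nhds (by norm_num)
  filter_upwards [hV] with z hz
  exact hurwitzZeta_kubert_of_one_lt_re q hq x hx0 hx1 hz

theorem hurwitzZeta_deriv_kubert (q : ℕ) (hq : 1 ≤ q) (x : ℝ) (hx0 : 0 < x) (hx1 : x ≤ 1)
    (s : ℂ) (hs : s ≠ 1) :
    (q : ℂ) ^ s * deriv (fun z => hurwitzZeta (x : UnitAddCircle) z) s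
      + (q : ℂ) ^ s * (Real.log q : ℂ) * hurwitzZeta (x : UnitAddCircle) s =
      ∑ r ∈ Finset.range q,
        deriv (fun z => hurwitzZeta ((((r : ℝ) + x) / q : ℝ) : UnitAddCircle) z) s := by
  have hq0 : (q : ℂ) ≠ 0 := by exact_mod_cast (by omega : q ≠ 0)
  -- the two functions agree on a neighborhood of s
  have heq : (fun z ↦ (q : ℂ) ^ z * hurwitzZeta (x : UnitAddCircle) z) =ᶠ[nhds s]
      (fun z ↦ ∑ r ∈ Finset.range q,
        hurwitzZeta ((((r : ℝ) + x) / q : ℝ) : UnitAddCircle) z) := by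
    filter_upwards [isOpen_compl_singleton.mem_nhds hs] with z hz
    exact hurwitzZeta_kubert q hq x hx0 hx1 hz
  have hderiv := heq.deriv_eq
  -- compute the derivative of the left side
  have hL : HasDerivAt (fun z ↦ (q : ℂ) ^ z * hurwitzZeta (x : UnitAddCircle) z)
      ((q : ℂ) ^ s * Complex.log q * hurwitzZeta (x : UnitAddCircle) s
        + (q : ℂ) ^ s * deriv (fun z ↦ hurwitzZeta (x : UnitAddCircle) z) s) s := by
    have h1 : HasDerivAt (fun z : ℂ ↦ (q : ℂ) ^ z) ((q : ℂ) ^ s * Complex.log q * 1) s :=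
      (hasDerivAt_id s).const_cpow (Or.inl hq0)
    have h2 : HasDerivAt (fun z ↦ hurwitzZeta (x : UnitAddCircle) z)
        (deriv (fun z ↦ hurwitzZeta (x : UnitAddCircle) z) s) s :=
      (differentiableAt_hurwitzZeta _ hs).hasDerivAt
    simpa [mul_one] using h1.fun_mul h2
  -- compute the derivative of the right side
  have hR : deriv (fun z ↦ ∑ r ∈ Finset.range q,
      hurwitzZeta ((((r : ℝ) + x) / q : ℝ) : UnitAddCircle) z) s =
      ∑ r ∈ Finset.range q,
        deriv (fun z ↦ hurwitzZeta ((((r : ℝ) + x) / q : ℝ) : UnitAddCircle) z) s := by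
    exact deriv_fun_sum fun r _ ↦ differentiableAt_hurwitzZeta _ hs
  have hlog : Complex.log (q : ℂ) = (Real.log q : ℂ) := by
    rw [← Complex.ofReal_natCast, Complex.ofReal_log (Nat.cast_nonneg q)]
  rw [hL.deriv] at hderiv
  rw [← hderiv] at hR
  rw [hlog] at hR
  linear_combination hR
end

section
/- (Gauss's multiplication theorem for the Gamma function) For every natural number q ≥ 1 and every real number x > 0, (2π)^{(q−1)/2} · q^{1/2 − x} · Γ(x) = ∏_{r=0}^{q−1} Γ((r + x)/q). -/
open Real Set Finset

open Polynomial Finset in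
private lemma prod_one_sub_root (q : ℕ) (hq : 0 < q) :
    ∏ i ∈ Finset.Ico 1 q, (1 - Complex.exp (2 * Real.pi * Complex.I * i / q)) = (q : ℂ) := by
  set ζ : ℂ := Complex.exp (2 * Real.pi * Complex.I / q) with hζdef
  have hζ : IsPrimitiveRoot ζ q := Complex.isPrimitiveRoot_exp q hq.ne'
  have hpow : ∀ i : ℕ, ζ ^ i = Complex.exp (2 * Real.pi * Complex.I * i / q) := by
    intro i
    rw [hζdef, ← Complex.exp_nat_mul]
    ring_nf
  have key : (X ^ q - C 1 : ℂ[X]) = ∏ i ∈ Finset.range q, (X - C (ζ ^ i)) := by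
    simpa using X_pow_sub_C_eq_prod hζ hq (one_pow q)
  have key2 : (X ^ q - 1 : ℂ[X]) = (X - 1) * ∏ i ∈ Finset.Ico 1 q, (X - C (ζ ^ i)) := by
    rw [map_one] at key
    rw [key, Finset.range_eq_Ico, Finset.prod_eq_prod_Ico_succ_bot hq]
    simp
  have key3 : (∑ i ∈ Finset.range q, (X : ℂ[X]) ^ i) = ∏ i ∈ Finset.Ico 1 q, (X - C (ζ ^ i)) := by
    have h1 : ((∑ i ∈ Finset.range q, (X : ℂ[X]) ^ i)) * (X - 1)
        = (∏ i ∈ Finset.Ico 1 q, (X - C (ζ ^ i))) * (X - 1) := by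
      rw [geom_sum_mul, key2]; ring
    exact mul_right_cancel₀ (X_sub_C_ne_zero 1) (by simpa using h1)
  have := congrArg (Polynomial.eval 1) key3
  simp only [eval_prod, eval_sum, eval_pow, eval_X, eval_sub, eval_one, eval_C, one_pow] at this
  simp only [← hpow]
  rw [← this]
  simp

private lemma abs_one_sub_exp (θ : ℝ) :
    ‖1 - Complex.exp (θ * Complex.I)‖ = 2 * |Real.sin (θ / 2)| := by
  rw [Complex.exp_mul_I]
  have h : (1 : ℂ) - (Complex.cos θ + Complex.sin θ * Complex.I) =
      ⟨1 - Real.cos θ, -Real.sin θ⟩ := by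
    apply Complex.ext <;>
      simp [Complex.cos_ofReal_re, Complex.sin_ofReal_re]
  rw [h, Complex.norm_def, Complex.normSq_mk]
  have hc : Real.cos θ = 1 - 2 * Real.sin (θ / 2) ^ 2 := by
    have h1 : Real.cos (2 * (θ / 2)) = Real.cos (θ / 2) ^ 2 - Real.sin (θ / 2) ^ 2 :=
      Real.cos_two_mul' _
    have h2 := Real.sin_sq_add_cos_sq (θ / 2)
    rw [(by ring : 2 * (θ / 2) = θ)] at h1
    nlinarith
  have : (1 - Real.cos θ) * (1 - Real.cos θ) + -Real.sin θ * -Real.sin θ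
      = (2 * |Real.sin (θ / 2)|) ^ 2 := by
    have h2 := Real.sin_sq_add_cos_sq θ
    rw [mul_pow, sq_abs]
    nlinarith
  rw [this, Real.sqrt_sq (by positivity)]

private lemma sin_prod (q : ℕ) (hq : 0 < q) :
    ∏ i ∈ Finset.Ico 1 q, (2 * Real.sin (Real.pi * i / q)) = q := by
  have h := congrArg (‖·‖) (prod_one_sub_root q hq)
  rw [norm_prod, Complex.norm_natCast] at h
  have hterm : ∀ i ∈ Finset.Ico 1 q,
      ‖1 - Complex.exp (2 * Real.pi * Complex.I * i / q)‖
        = 2 * Real.sin (Real.pi * i / q) := by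
    intro i hi
    rw [Finset.mem_Ico] at hi
    have hcast : 2 * (Real.pi:ℂ) * Complex.I * i / q
        = ((2 * Real.pi * i / q : ℝ) : ℂ) * Complex.I := by
      push_cast; ring
    rw [hcast, abs_one_sub_exp]
    have h2 : 2 * Real.pi * ↑i / ↑q / 2 = Real.pi * i / q := by ring
    rw [h2, abs_of_pos]
    apply Real.sin_pos_of_pos_of_lt_pi
    · have : (0:ℝ) < i := by exact_mod_cast hi.1
      have : (0:ℝ) < q := by exact_mod_cast hq
      rw [mul_div_assoc]; positivity
    · rw [mul_div_assoc]
      have h3 : (i:ℝ) / q < 1 := by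
        rw [div_lt_one (by exact_mod_cast hq)]
        exact_mod_cast hi.2
      nlinarith [Real.pi_pos]
  rw [Finset.prod_congr rfl hterm] at h
  exact h

private lemma gammaP (q : ℕ) (hq : 1 ≤ q) :
    (∏ i ∈ Finset.Ico 1 q, Real.Gamma ((i:ℝ)/q)) ^ 2 = (2*Real.pi) ^ (q-1) / q := by
  have hsin := sin_prod q hq
  have hq0 : (0:ℝ) < q := by exact_mod_cast hq
  have hrefl : ∏ i ∈ Finset.Ico 1 q, Real.Gamma ((i:ℝ)/q)
      = ∏ i ∈ Finset.Ico 1 q, Real.Gamma (1 - (i:ℝ)/q) := by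
    refine Finset.prod_nbij' (fun i => q - i) (fun i => q - i) ?_ ?_ ?_ ?_ ?_
    · intro i hi
      simp only [Finset.mem_Ico] at hi ⊢
      omega
    · intro i hi
      simp only [Finset.mem_Ico] at hi ⊢
      omega
    · intro i hi; simp only [Finset.mem_Ico] at hi; omega
    · intro i hi; simp only [Finset.mem_Ico] at hi; omega
    · intro i hi
      rw [Finset.mem_Ico] at hi
      congr 1
      rw [Nat.cast_sub hi.2.le]
      field_simp
      ring
  have hsq : (∏ i ∈ Finset.Ico 1 q, Real.Gamma ((i:ℝ)/q)) ^ 2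
      = ∏ i ∈ Finset.Ico 1 q, (Real.pi / Real.sin (Real.pi * i / q)) := by
    rw [sq]
    nth_rewrite 2 [hrefl]
    rw [← Finset.prod_mul_distrib]
    refine Finset.prod_congr rfl fun i hi => ?_
    rw [Real.Gamma_mul_Gamma_one_sub, mul_div_assoc]
  rw [hsq]
  have h2 : ∀ i ∈ Finset.Ico 1 q, Real.pi / Real.sin (Real.pi * i / q)
      = 2 * Real.pi / (2 * Real.sin (Real.pi * i / q)) := by
    intro i hi
    rw [mul_div_mul_left _ _ (two_ne_zero)]
  rw [Finset.prod_congr rfl h2, Finset.prod_div_distrib, hsin, Finset.prod_const,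
    Nat.card_Ico]

noncomputable def gaussG (q : ℕ) (x : ℝ) : ℝ :=
  (2 * Real.pi) ^ (((1:ℝ) - q) / 2) * (q : ℝ) ^ (x - 1/2) *
    ∏ r ∈ Finset.range q, Real.Gamma (((r : ℝ) + x) / q)

private lemma gaussG_pos {q : ℕ} (hq : 1 ≤ q) {x : ℝ} (hx : 0 < x) : 0 < gaussG q x := by
  have hq0 : (0:ℝ) < q := by exact_mod_cast hq
  have h2 : (0:ℝ) < 2 * Real.pi := by positivity
  refine mul_pos (mul_pos (rpow_pos_of_pos h2 _) (rpow_pos_of_pos hq0 _)) ?_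
  exact Finset.prod_pos fun r _ => Real.Gamma_pos_of_pos (by positivity)

private lemma gaussG_add_one {q : ℕ} (hq : 1 ≤ q) {x : ℝ} (hx : 0 < x) :
    gaussG q (x + 1) = x * gaussG q x := by
  have hq0 : (0:ℝ) < q := by exact_mod_cast hq
  set f : ℕ → ℝ := fun r => Real.Gamma (((r : ℝ) + x) / q) with hf
  have hf0 : f 0 ≠ 0 := by
    have : (0:ℝ) < ((0:ℕ) + x) / q := by positivity
    exact (Real.Gamma_pos_of_pos this).ne'
  have hstep : ∏ r ∈ Finset.range q, Real.Gamma (((r : ℝ) + (x+1)) / q)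
      = (x / q) * ∏ r ∈ Finset.range q, f r := by
    have h1 : ∀ r ∈ Finset.range q, Real.Gamma (((r : ℝ) + (x+1)) / q) = f (r + 1) := by
      intro r _
      simp only [hf]
      push_cast
      ring_nf
    rw [Finset.prod_congr rfl h1]
    have h2 : ∏ i ∈ Finset.range (q+1), f i = (∏ i ∈ Finset.range q, f (i+1)) * f 0 :=
      Finset.prod_range_succ' f q
    have h3 : ∏ i ∈ Finset.range (q+1), f i = (∏ i ∈ Finset.range q, f i) * f q :=
      Finset.prod_range_succ f q
    have h4 : f q = (x / q) * f 0 := by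
      simp only [hf]
      have : ((q:ℝ) + x) / q = x / q + 1 := by field_simp; ring
      rw [this, Real.Gamma_add_one (by positivity : x / (q:ℝ) ≠ 0)]
      simp
    have h6 := h2.symm.trans h3
    apply mul_right_cancel₀ hf0
    rw [h6, h4]
    ring
  rw [gaussG, gaussG, hstep]
  have h5 : (q:ℝ) ^ (x + 1 - 1/2) = (q:ℝ) ^ (x - 1/2) * q := by
    rw [(by ring : x + 1 - 1/2 = (x - 1/2) + 1), rpow_add hq0, rpow_one]
  rw [h5]
  field_simp
  ring

private lemma prod_shift (q : ℕ) (hq : 1 ≤ q) :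
    ∏ r ∈ Finset.range q, Real.Gamma (((r : ℝ) + 1) / q)
      = ∏ i ∈ Finset.Ico 1 q, Real.Gamma ((i:ℝ)/q) := by
  obtain ⟨m, rfl⟩ := Nat.exists_eq_succ_of_ne_zero (by omega : q ≠ 0)
  rw [Finset.prod_range_succ, Finset.prod_Ico_eq_prod_range]
  have hlast : (((m:ℕ):ℝ) + 1) / ((m:ℕ) + 1 : ℕ) = 1 := by
    push_cast
    field_simp
  rw [hlast, Real.Gamma_one, mul_one]
  refine Finset.prod_congr (by simp) fun i _ => ?_
  congr 1
  push_cast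
  ring

private lemma gaussG_one (q : ℕ) (hq : 1 ≤ q) : gaussG q 1 = 1 := by
  have hP := gammaP q hq
  have hshift := prod_shift q hq
  have hpos : (0:ℝ) < gaussG q 1 := gaussG_pos hq one_pos
  rw [gaussG] at hpos ⊢
  have hq0 : (0:ℝ) < q := by exact_mod_cast hq
  have h2pi : (0:ℝ) < 2 * Real.pi := by positivity
  set a := (2 * Real.pi) ^ (((1:ℝ) - q) / 2) * (q : ℝ) ^ ((1:ℝ) - 1/2) *
      ∏ r ∈ Finset.range q, Real.Gamma (((r : ℝ) + 1) / q) with ha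
  have hsq : a ^ 2 = 1 := by
    rw [ha, hshift, mul_pow, mul_pow, hP]
    have hA : ((2 * Real.pi) ^ (((1:ℝ) - q) / 2)) ^ 2 = (2 * Real.pi) ^ ((1:ℝ) - q) := by
      rw [← Real.rpow_natCast (_ ^ _) 2, ← Real.rpow_mul h2pi.le]
      norm_num
    have hB : ((q:ℝ) ^ ((1:ℝ) - 1/2)) ^ 2 = (q : ℝ) := by
      rw [← Real.rpow_natCast (_ ^ _) 2, ← Real.rpow_mul hq0.le]
      norm_num
    have hC : (2 * Real.pi) ^ ((1:ℝ) - q) * ((2*Real.pi) ^ (q-1) : ℝ) = 1 := by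
      rw [← Real.rpow_natCast (2*Real.pi) (q-1), Nat.cast_sub hq, Nat.cast_one,
        ← Real.rpow_add h2pi]
      norm_num
    rw [hA, hB]
    field_simp
    nlinarith [hC]
  have h1 : (a - 1) * (a + 1) = 0 := by nlinarith
  rcases mul_eq_zero.mp h1 with h | h
  · linarith
  · linarith

private lemma convexOn_affine (m c : ℝ) : ConvexOn ℝ (Set.Ioi 0) (fun x : ℝ => m * x + c) := by
  refine ⟨convex_Ioi 0, fun x _ y _ s t hs ht hst => ?_⟩
  simp only [smul_eq_mul]
  have heq : m * (s * x + t * y) + c = s * (m * x + c) + t * (m * y + c) := by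
    linear_combination (-c) * hst
  exact heq.le

private lemma convexOn_log_Gamma_affine {a b : ℝ} (ha : 0 < a) (hb : 0 ≤ b) :
    ConvexOn ℝ (Set.Ioi 0) (fun x => Real.log (Real.Gamma (a * x + b))) := by
  refine ⟨convex_Ioi 0, fun x hx y hy s t hs ht hst => ?_⟩
  have hx' : a * x + b ∈ Set.Ioi (0:ℝ) := by
    have : (0:ℝ) < x := hx
    simp only [Set.mem_Ioi]
    positivity
  have hy' : a * y + b ∈ Set.Ioi (0:ℝ) := by
    have : (0:ℝ) < y := hy
    simp only [Set.mem_Ioi]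
    positivity
  have h := Real.convexOn_log_Gamma.2 hx' hy' hs ht hst
  simp only [Function.comp_apply, smul_eq_mul] at h ⊢
  have harg : a * (s * x + t * y) + b = s * (a * x + b) + t * (a * y + b) := by
    linear_combination (-b) * hst
  rw [harg]
  exact h

private lemma convexOn_log_gaussG (q : ℕ) (hq : 1 ≤ q) :
    ConvexOn ℝ (Set.Ioi 0) (Real.log ∘ gaussG q) := by
  have hq0 : (0:ℝ) < q := by exact_mod_cast hq
  have h2pi : (0:ℝ) < 2 * Real.pi := by positivity
  have hsum : ∀ s : Finset ℕ, ConvexOn ℝ (Set.Ioi 0)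
      (fun x => ∑ r ∈ s, Real.log (Real.Gamma (((r:ℝ) + x) / q))) := by
    intro s
    induction s using Finset.induction_on with
    | empty => simpa using convexOn_const (0:ℝ) (convex_Ioi 0)
    | @insert r s hr ih =>
        simp only [Finset.sum_insert hr]
        refine ConvexOn.add ?_ ih
        have : (fun x => Real.log (Real.Gamma (((r:ℝ) + x) / q)))
            = fun x => Real.log (Real.Gamma ((1/(q:ℝ)) * x + (r:ℝ)/q)) := by
          funext x
          have h9 : ((r:ℝ) + x) / q = (1/(q:ℝ)) * x + (r:ℝ)/q := by
            field_simp
            ring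
          rw [h9]
        rw [this]
        exact convexOn_log_Gamma_affine (by positivity) (by positivity)
  have key : ConvexOn ℝ (Set.Ioi 0) (fun x =>
      (Real.log q * x + (((1:ℝ) - q)/2 * Real.log (2 * Real.pi) - 1/2 * Real.log q))
      + ∑ r ∈ Finset.range q, Real.log (Real.Gamma (((r:ℝ) + x) / q))) :=
    (convexOn_affine _ _).add (hsum _)
  refine key.congr fun x hx => ?_
  have hx0 : (0:ℝ) < x := hx
  have hA : (0:ℝ) < (2 * Real.pi) ^ (((1:ℝ) - q) / 2) := Real.rpow_pos_of_pos h2pi _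
  have hB : (0:ℝ) < (q:ℝ) ^ (x - 1/2) := Real.rpow_pos_of_pos hq0 _
  have hprod : ∀ r ∈ Finset.range q, Real.Gamma (((r:ℝ) + x) / q) ≠ 0 := by
    intro r _
    exact (Real.Gamma_pos_of_pos (by positivity)).ne'
  have hprodpos : (0:ℝ) < ∏ r ∈ Finset.range q, Real.Gamma (((r:ℝ) + x) / q) :=
    Finset.prod_pos fun r hr => Real.Gamma_pos_of_pos (by positivity)
  simp only [Function.comp_apply, gaussG]
  rw [Real.log_mul (by positivity) hprodpos.ne', Real.log_mul hA.ne' hB.ne',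
    Real.log_prod hprod, Real.log_rpow h2pi, Real.log_rpow hq0]
  ring

theorem gauss_multiplication (q : ℕ) (hq : 1 ≤ q) (x : ℝ) (hx : 0 < x) :
    (2 * Real.pi) ^ (((q : ℝ) - 1) / 2) * (q : ℝ) ^ ((1 : ℝ) / 2 - x) * Real.Gamma x =
      ∏ r ∈ Finset.range q, Real.Gamma (((r : ℝ) + x) / q) := by
  have hq0 : (0:ℝ) < q := by exact_mod_cast hq
  have h2pi : (0:ℝ) < 2 * Real.pi := by positivity
  have hG : gaussG q x = Real.Gamma x :=
    Real.eq_Gamma_of_log_convex (convexOn_log_gaussG q hq)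
      (fun {y} hy => gaussG_add_one hq hy) (fun {y} hy => gaussG_pos hq hy)
      (gaussG_one q hq) hx
  rw [← hG, gaussG,
    show ((q:ℝ) - 1) / 2 = -(((1:ℝ) - q) / 2) by ring,
    show (1:ℝ)/2 - x = -(x - 1/2) by ring,
    Real.rpow_neg h2pi.le, Real.rpow_neg hq0.le]
  have hA : ((2 * Real.pi) ^ (((1:ℝ) - q) / 2) : ℝ) ≠ 0 := (Real.rpow_pos_of_pos h2pi _).ne'
  have hB : ((q:ℝ) ^ (x - 1/2) : ℝ) ≠ 0 := (Real.rpow_pos_of_pos hq0 _).ne'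
  field_simp
end
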